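/- Let e : 𝕃_n → 𝔓_{n+1} be the Lie algebra homomorphism with e(x_i) = A_{i,n+1} for 1 ≤ i ≤ n, and ι : 𝔓_n → 𝔓_{n+1} the Lie algebra homomorphism with ι(A_{i,j}) = A_{i,j} for 1 ≤ i ≠ j ≤ n. Then: (i) e and ι are injective; (ii) the range of e is a Lie ideal of 𝔓_{n+1}; (iii) 𝔓_{n+1} is the direct sum of the ranges of e and ι as K-vector spaces (range e ∩ range ι = {0} and range e + range ι = 𝔓_{n+1}); (iv) the adjoint action of ι(𝔓_n) on range e is given by the infinitesimal braid action: [ι(σ), e(u)] = e(θ(σ)(u)) for all σ ∈ 𝔓_n and u ∈ 𝕃_n. -/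

import Mathlib

/-! Drinfeld–Kohno Lie algebra and the infinitesimal braid action. -/

open FreeLieAlgebra

/-- The free Lie algebra `𝕃_n` on generators `x_1, …, x_n`. -/
abbrev FreeLie (K : Type*) [Field K] (n : ℕ) := FreeLieAlgebra K (Fin n)

/-- Index type for the generators `A_{i,j}` (`i ≠ j`) of the Drinfeld–Kohno Lie algebra. -/
abbrev DKGenIdx (n : ℕ) := {p : Fin n × Fin n // p.1 ≠ p.2}

/-- The set of infinitesimal braid relations inside the free Lie algebra on the `A_{i,j}`. -/
def dkRels (K : Type*) [Field K] (n : ℕ) : Set (FreeLieAlgebra K (DKGenIdx n)) :=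
  (⋃ (i : Fin n) (j : Fin n) (h : i ≠ j),
      {of K (⟨(i, j), h⟩ : DKGenIdx n) - of K (⟨(j, i), h.symm⟩ : DKGenIdx n)}) ∪
  (⋃ (i : Fin n) (j : Fin n) (k : Fin n) (hij : i ≠ j) (hjk : j ≠ k) (hik : i ≠ k),
      {⁅of K (⟨(i, k), hik⟩ : DKGenIdx n),
        of K (⟨(i, j), hij⟩ : DKGenIdx n) + of K (⟨(j, k), hjk⟩ : DKGenIdx n)⁆}) ∪
  (⋃ (i : Fin n) (j : Fin n) (k : Fin n) (l : Fin n)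
      (hij : i ≠ j) (hkl : k ≠ l) (_ : i ≠ k) (_ : i ≠ l) (_ : j ≠ k) (_ : j ≠ l),
      {⁅of K (⟨(i, j), hij⟩ : DKGenIdx n), of K (⟨(k, l), hkl⟩ : DKGenIdx n)⁆})

/-- The Lie ideal generated by the infinitesimal braid relations. -/
noncomputable def dkIdeal (K : Type*) [Field K] (n : ℕ) : LieIdeal K (FreeLieAlgebra K (DKGenIdx n)) :=
  LieSubmodule.lieSpan K _ (dkRels K n)

/-- The Drinfeld–Kohno Lie algebra `𝔓_n`. -/
abbrev DK (K : Type*) [Field K] (n : ℕ) :=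
  FreeLieAlgebra K (DKGenIdx n) ⧸ dkIdeal K n

/-- The generator `A_{i,j}` of the Drinfeld–Kohno Lie algebra `𝔓_n`. -/
noncomputable def dkGen (K : Type*) [Field K] {n : ℕ} {i j : Fin n} (h : i ≠ j) : DK K n :=
  LieSubmodule.Quotient.mk (N := dkIdeal K n) (of K (⟨(i, j), h⟩ : DKGenIdx n))

section Aux
variable {K : Type*} [Field K]

theorem freeLie_mem {X : Type*} (S : LieSubalgebra K (FreeLieAlgebra K X))
    (h : ∀ x, of K x ∈ S) : ∀ z, z ∈ S := by
  intro z
  have key : S.incl.comp (lift K (fun x => (⟨of K x, h x⟩ : S))) = LieHom.id := by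
    apply FreeLieAlgebra.hom_ext
    intro x
    simp [FreeLieAlgebra.lift_of_apply]
  have := LieHom.congr_fun key z
  simp only [LieHom.comp_apply, LieHom.id_apply] at this
  rw [← this]
  exact (lift K (fun x => (⟨of K x, h x⟩ : S)) z).2

/-- quotient map as a Lie algebra hom -/
noncomputable def dkMk (K : Type*) [Field K] (m : ℕ) :
    FreeLieAlgebra K (DKGenIdx m) →ₗ⁅K⁆ DK K m where
  toFun := LieSubmodule.Quotient.mk (N := dkIdeal K m)
  map_add' := fun _ _ => rfl
  map_smul' := fun _ _ => rfl
  map_lie' := fun {x y} => rfl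

theorem dkMk_surjective (m : ℕ) : Function.Surjective (dkMk K m) :=
  Quot.mk_surjective

theorem dkMk_of {m : ℕ} {i j : Fin m} (h : i ≠ j) :
    dkMk K m (of K (⟨(i, j), h⟩ : DKGenIdx m)) = dkGen K h := rfl

theorem dk_mem {m : ℕ} (S : LieSubalgebra K (DK K m))
    (h : ∀ (i j : Fin m) (hij : i ≠ j), dkGen K hij ∈ S) : ∀ z, z ∈ S := by
  intro z
  obtain ⟨x, rfl⟩ := dkMk_surjective (K := K) m z
  have : ∀ y, y ∈ S.comap (dkMk K m) := by
    apply freeLie_mem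
    rintro ⟨⟨i, j⟩, hij⟩
    show dkMk K m _ ∈ S
    rw [dkMk_of]
    exact h i j hij
  exact this x

theorem dk_rel_mk_eq_zero {m : ℕ} {r : FreeLieAlgebra K (DKGenIdx m)}
    (hr : r ∈ dkRels K m) : dkMk K m r = 0 := by
  have : r ∈ dkIdeal K m := LieSubmodule.subset_lieSpan hr
  exact (LieSubmodule.Quotient.mk_eq_zero' ).mpr this

theorem dkGen_symm {m : ℕ} {i j : Fin m} (h : i ≠ j) :
    dkGen K h = dkGen K h.symm := by
  have : dkMk K m (of K (⟨(i, j), h⟩ : DKGenIdx m) - of K (⟨(j, i), h.symm⟩ : DKGenIdx m)) = 0 := by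
    apply dk_rel_mk_eq_zero
    apply Or.inl; apply Or.inl
    simp only [Set.mem_iUnion]
    exact ⟨i, j, h, rfl⟩
  rw [map_sub (dkMk K m), sub_eq_zero] at this
  exact this

theorem dk_rel2 {m : ℕ} {i j k : Fin m} (hij : i ≠ j) (hjk : j ≠ k) (hik : i ≠ k) :
    ⁅dkGen K hik, dkGen K hij + dkGen K hjk⁆ = 0 := by
  have : dkMk K m ⁅of K (⟨(i, k), hik⟩ : DKGenIdx m),
      of K (⟨(i, j), hij⟩ : DKGenIdx m) + of K (⟨(j, k), hjk⟩ : DKGenIdx m)⁆ = 0 := by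
    apply dk_rel_mk_eq_zero
    apply Or.inl; apply Or.inr
    simp only [Set.mem_iUnion]
    exact ⟨i, j, k, hij, hjk, hik, rfl⟩
  rw [LieHom.map_lie, map_add (dkMk K m)] at this
  exact this

theorem dk_rel3 {m : ℕ} {i j k l : Fin m} (hij : i ≠ j) (hkl : k ≠ l)
    (hik : i ≠ k) (hil : i ≠ l) (hjk : j ≠ k) (hjl : j ≠ l) :
    ⁅dkGen K hij, dkGen K hkl⁆ = 0 := by
  have : dkMk K m ⁅of K (⟨(i, j), hij⟩ : DKGenIdx m),
      of K (⟨(k, l), hkl⟩ : DKGenIdx m)⁆ = 0 := by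
    apply dk_rel_mk_eq_zero
    apply Or.inr
    simp only [Set.mem_iUnion]
    exact ⟨i, j, k, l, hij, hkl, hik, hil, hjk, hjl, rfl⟩
  rw [LieHom.map_lie] at this
  exact this

end Aux

section SDSec
variable {K : Type*} [Field K] {n : ℕ}

/-- The semidirect product `𝕃_n ⋊_θ 𝔓_n`. -/
def SD (θ : DK K n →ₗ⁅K⁆ LieDerivation K (FreeLie K n) (FreeLie K n)) : Type _ :=
  FreeLie K n × DK K n

namespace SD

variable (θ : DK K n →ₗ⁅K⁆ LieDerivation K (FreeLie K n) (FreeLie K n))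

noncomputable instance : AddCommGroup (SD θ) := inferInstanceAs (AddCommGroup (FreeLie K n × DK K n))
noncomputable instance : Module K (SD θ) := inferInstanceAs (Module K (FreeLie K n × DK K n))

/-- constructor -/
noncomputable def mk (a : FreeLie K n) (σ : DK K n) : SD θ := (a, σ)
def fst (x : SD θ) : FreeLie K n := Prod.fst x
def snd (x : SD θ) : DK K n := Prod.snd x

@[simp] lemma fst_mk (a : FreeLie K n) (σ : DK K n) : fst θ (mk θ a σ) = a := rfl
@[simp] lemma snd_mk (a : FreeLie K n) (σ : DK K n) : snd θ (mk θ a σ) = σ := rfl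
@[simp] lemma fst_add (x y : SD θ) : fst θ (x + y) = fst θ x + fst θ y := rfl
@[simp] lemma snd_add (x y : SD θ) : snd θ (x + y) = snd θ x + snd θ y := rfl
@[simp] lemma fst_sub (x y : SD θ) : fst θ (x - y) = fst θ x - fst θ y := rfl
@[simp] lemma snd_sub (x y : SD θ) : snd θ (x - y) = snd θ x - snd θ y := rfl
@[simp] lemma fst_neg (x : SD θ) : fst θ (-x) = -fst θ x := rfl
@[simp] lemma snd_neg (x : SD θ) : snd θ (-x) = -snd θ x := rfl
@[simp] lemma fst_zero : fst θ (0 : SD θ) = 0 := rfl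
@[simp] lemma snd_zero : snd θ (0 : SD θ) = 0 := rfl
@[simp] lemma fst_smul (c : K) (x : SD θ) : fst θ (c • x) = c • fst θ x := rfl
@[simp] lemma snd_smul (c : K) (x : SD θ) : snd θ (c • x) = c • snd θ x := rfl

@[ext] lemma ext {x y : SD θ} (h1 : fst θ x = fst θ y) (h2 : snd θ x = snd θ y) : x = y :=
  Prod.ext h1 h2

@[simp] lemma mk_eq_zero_iff (a : FreeLie K n) (σ : DK K n) :
    mk θ a σ = 0 ↔ a = 0 ∧ σ = 0 := Prod.mk_eq_zero

noncomputable instance : LieRing (SD θ) :=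
  { (inferInstance : AddCommGroup (SD θ)) with
    bracket := fun x y =>
      mk θ (⁅fst θ x, fst θ y⁆ + θ (snd θ x) (fst θ y) - θ (snd θ y) (fst θ x))
        ⁅snd θ x, snd θ y⁆
    add_lie := by
      intro x y z
      apply ext θ <;>
        simp [add_lie, map_add, LieDerivation.coe_add, LinearMap.add_apply] <;> abel
    lie_add := by
      intro x y z
      apply ext θ <;>
        simp [lie_add, map_add, LieDerivation.coe_add, LinearMap.add_apply] <;> abel
    lie_self := by
      intro x
      apply ext θ <;> simp
    leibniz_lie := by
      intro x y z
      apply ext θ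
      · show ⁅fst θ x, ⁅fst θ y, fst θ z⁆ + θ (snd θ y) (fst θ z) - θ (snd θ z) (fst θ y)⁆ +
            θ (snd θ x) (⁅fst θ y, fst θ z⁆ + θ (snd θ y) (fst θ z) - θ (snd θ z) (fst θ y)) -
            θ ⁅snd θ y, snd θ z⁆ (fst θ x) = _
        simp only [map_add, map_sub, LieDerivation.apply_lie_eq_add, LieHom.map_lie,
          LieDerivation.lie_apply, lie_add, lie_sub, add_lie, sub_lie]
        rw [leibniz_lie (fst θ x) (fst θ y) (fst θ z)]
        simp only [fst_add, snd_add, fst_mk, snd_mk, map_add, map_sub,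
          LieDerivation.apply_lie_eq_add, LieHom.map_lie,
          LieDerivation.lie_apply, lie_add, lie_sub, add_lie, sub_lie]
        rw [show ⁅(θ (snd θ z)) (fst θ x), fst θ y⁆ =
            -⁅fst θ y, (θ (snd θ z)) (fst θ x)⁆ from (lie_skew _ _).symm]
        abel
      · show ⁅snd θ x, ⁅snd θ y, snd θ z⁆⁆ = _
        rw [leibniz_lie]
        rfl }

@[simp] lemma fst_bracket (x y : SD θ) :
    fst θ ⁅x, y⁆ = ⁅fst θ x, fst θ y⁆ + θ (snd θ x) (fst θ y) - θ (snd θ y) (fst θ x) := rfl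
@[simp] lemma snd_bracket (x y : SD θ) : snd θ ⁅x, y⁆ = ⁅snd θ x, snd θ y⁆ := rfl

noncomputable instance : LieAlgebra K (SD θ) where
  lie_smul c x y := by
    apply ext θ
    · show ⁅fst θ x, fst θ (c • y)⁆ + θ (snd θ x) (fst θ (c • y)) -
          θ (snd θ (c • y)) (fst θ x) = _
      rw [fst_smul, snd_smul, LieAlgebra.lie_smul, map_smul θ]
      simp only [map_smul]
      show _ = c • (⁅fst θ x, fst θ y⁆ + θ (snd θ x) (fst θ y) - θ (snd θ y) (fst θ x))
      simp only [LieDerivation.smul_apply, smul_add, smul_sub]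
    · show ⁅snd θ x, snd θ (c • y)⁆ = _
      rw [snd_smul, LieAlgebra.lie_smul]
      rfl

/-- left inclusion -/
noncomputable def inl : FreeLie K n →ₗ⁅K⁆ SD θ where
  toFun a := mk θ a 0
  map_add' a b := by apply ext θ <;> simp
  map_smul' c a := by apply ext θ <;> simp
  map_lie' {a b} := by apply ext θ <;> simp

/-- right inclusion -/
noncomputable def inr : DK K n →ₗ⁅K⁆ SD θ where
  toFun σ := mk θ 0 σ
  map_add' a b := by apply ext θ <;> simp
  map_smul' c a := by apply ext θ <;> simp
  map_lie' {a b} := by apply ext θ <;> simp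

@[simp] lemma inl_apply (a : FreeLie K n) : inl θ a = mk θ a 0 := rfl
@[simp] lemma inr_apply (σ : DK K n) : inr θ σ = mk θ 0 σ := rfl

end SD
end SDSec

section Phi
open Fin
variable {K : Type*} [Field K] {n : ℕ}

theorem dkGen_congr {m : ℕ} {i j i' j' : Fin m} (h : i ≠ j) (h' : i' ≠ j')
    (hi : i = i') (hj : j = j') : dkGen K h = dkGen K h' := by
  subst hi; subst hj; rfl

/-- Lift a Lie algebra homomorphism killing the relations to the quotient. -/
noncomputable def dkLift {m : ℕ} {L' : Type*} [LieRing L'] [LieAlgebra K L']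
    (f : FreeLieAlgebra K (DKGenIdx m) →ₗ⁅K⁆ L')
    (hf : ∀ r ∈ dkRels K m, f r = 0) : DK K m →ₗ⁅K⁆ L' :=
  have hle : (dkIdeal K m).toSubmodule ≤ LinearMap.ker (f : _ →ₗ[K] L') := by
    have h1 : dkIdeal K m ≤ f.ker := by
      apply LieSubmodule.lieSpan_le.mpr
      intro r hr
      exact LieHom.mem_ker.mpr (hf r hr)
    intro x hx
    exact LinearMap.mem_ker.mpr (LieHom.mem_ker.mp (h1 hx))
  { Submodule.liftQ (dkIdeal K m).toSubmodule (f : _ →ₗ[K] L') hle with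
    map_lie' := by
      intro x y
      obtain ⟨a, rfl⟩ := dkMk_surjective (K := K) m x
      obtain ⟨b, rfl⟩ := dkMk_surjective (K := K) m y
      exact f.map_lie a b }

@[simp] theorem dkLift_mk {m : ℕ} {L' : Type*} [LieRing L'] [LieAlgebra K L']
    (f : FreeLieAlgebra K (DKGenIdx m) →ₗ⁅K⁆ L')
    (hf : ∀ r ∈ dkRels K m, f r = 0) (x : FreeLieAlgebra K (DKGenIdx m)) :
    dkLift f hf (dkMk K m x) = f x := rfl

theorem dk_hom_ext {m : ℕ} {L' : Type*} [LieRing L'] [LieAlgebra K L']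
    {f g : DK K m →ₗ⁅K⁆ L'}
    (h : ∀ (i j : Fin m) (hij : i ≠ j), f (dkGen K hij) = g (dkGen K hij)) : f = g := by
  have key : f.comp (dkMk K m) = g.comp (dkMk K m) := by
    apply FreeLieAlgebra.hom_ext
    rintro ⟨⟨i, j⟩, hij⟩
    simpa only [LieHom.comp_apply, dkMk_of] using h i j hij
  ext z
  obtain ⟨x, rfl⟩ := dkMk_surjective (K := K) m z
  exact LieHom.congr_fun key x

variable (θ : DK K n →ₗ⁅K⁆ LieDerivation K (FreeLie K n) (FreeLie K n))

/-- generator values of the map `𝔓_{n+1} → 𝕃_n ⋊ 𝔓_n`. -/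
noncomputable def phiGen (p : DKGenIdx (n + 1)) : SD θ :=
  if hi : p.1.1 = Fin.last n then
    SD.mk θ (of K (p.1.2.castPred (fun hj => p.2 (hi.trans hj.symm)))) 0
  else if hj : p.1.2 = Fin.last n then
    SD.mk θ (of K (p.1.1.castPred hi)) 0
  else
    SD.mk θ 0 (dkGen K (show p.1.1.castPred hi ≠ p.1.2.castPred hj from fun hc => p.2 (by
      rw [← Fin.castSucc_castPred p.1.1 hi, ← Fin.castSucc_castPred p.1.2 hj, hc])))

theorem phiGen_ss (i j : Fin n) (hij : castSucc i ≠ castSucc j) :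
    phiGen θ ⟨(castSucc i, castSucc j), hij⟩ =
      SD.mk θ 0 (dkGen K ((Fin.castSucc_injective n).ne_iff.mp hij)) := by
  simp only [phiGen]
  rw [dif_neg (Fin.castSucc_lt_last i).ne, dif_neg (Fin.castSucc_lt_last j).ne]
  exact congrArg (SD.mk θ 0) (dkGen_congr _ _ (Fin.castPred_castSucc _) (Fin.castPred_castSucc _))

theorem phiGen_sl (i : Fin n) (h : castSucc i ≠ Fin.last n) :
    phiGen θ ⟨(castSucc i, Fin.last n), h⟩ = SD.mk θ (of K i) 0 := by
  simp only [phiGen]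
  simp [Fin.castPred_castSucc, (Fin.castSucc_lt_last i).ne]

theorem phiGen_ls (j : Fin n) (h : Fin.last n ≠ castSucc j) :
    phiGen θ ⟨(Fin.last n, castSucc j), h⟩ = SD.mk θ (of K j) 0 := by
  simp only [phiGen]
  simp [Fin.castPred_castSucc, (Fin.castSucc_lt_last j).ne]

end Phi

section Phi2
open Fin
variable {K : Type*} [Field K] {n : ℕ}
variable (θ : DK K n →ₗ⁅K⁆ LieDerivation K (FreeLie K n) (FreeLie K n))

/-- The splitting homomorphism `𝔓_{n+1} → 𝕃_n ⋊ 𝔓_n`. -/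
noncomputable def phi
    (hθ : ∀ (i j : Fin n) (h : i ≠ j) (k : Fin n),
      θ (dkGen K h) (of K k) =
        if k = i then ⁅of K i, of K j⁆
        else if k = j then ⁅of K j, of K i⁆
        else 0) : DK K (n + 1) →ₗ⁅K⁆ SD θ :=
  dkLift (lift K (phiGen θ)) (by
    rintro r ((hr | hr) | hr)
    · simp only [Set.mem_iUnion, Set.mem_singleton_iff] at hr
      obtain ⟨i, j, hij, rfl⟩ := hr
      rw [map_sub (lift K (phiGen θ)), lift_of_apply, lift_of_apply, sub_eq_zero]
      rcases Fin.eq_castSucc_or_eq_last i with ⟨i', rfl⟩ | rfl <;>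
        rcases Fin.eq_castSucc_or_eq_last j with ⟨j', rfl⟩ | rfl
      · rw [phiGen_ss, phiGen_ss]
        exact congrArg (SD.mk θ 0) (dkGen_symm _)
      · rw [phiGen_sl, phiGen_ls]
      · rw [phiGen_ls, phiGen_sl]
      · exact absurd rfl hij
    · simp only [Set.mem_iUnion, Set.mem_singleton_iff] at hr
      obtain ⟨i, j, k, hij, hjk, hik, rfl⟩ := hr
      rw [LieHom.map_lie, map_add (lift K (phiGen θ)), lift_of_apply, lift_of_apply, lift_of_apply]
      rcases Fin.eq_castSucc_or_eq_last i with ⟨i', rfl⟩ | rfl <;>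
        rcases Fin.eq_castSucc_or_eq_last j with ⟨j', rfl⟩ | rfl <;>
          rcases Fin.eq_castSucc_or_eq_last k with ⟨k', rfl⟩ | rfl
      -- (s,s,s)
      · rw [phiGen_ss, phiGen_ss, phiGen_ss]
        apply SD.ext θ
        · simp
        · simp only [SD.snd_bracket, SD.snd_add, SD.snd_mk, SD.snd_zero]
          exact dk_rel2 ((Fin.castSucc_injective n).ne_iff.mp hij)
            ((Fin.castSucc_injective n).ne_iff.mp hjk)
            ((Fin.castSucc_injective n).ne_iff.mp hik)
      -- (s,s,l)
      · rw [phiGen_sl, phiGen_ss, phiGen_sl]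
        have hij' : i' ≠ j' := (Fin.castSucc_injective n).ne_iff.mp hij
        apply SD.ext θ
        · simp [hθ i' j' hij' i', hij']
          rw [← lie_skew (of K j') (of K i')]
          abel
        · simp
      -- (s,l,s)
      · rw [phiGen_ss, phiGen_sl, phiGen_ls]
        have hik' : i' ≠ k' := (Fin.castSucc_injective n).ne_iff.mp hik
        apply SD.ext θ
        · simp [hθ i' k' hik' i', hθ i' k' hik' k', hik', hik'.symm]
          rw [← lie_skew (of K i') (of K k')]
          abel
        · simp
      · exact absurd rfl hjk
      -- (l,s,s)
      · rw [phiGen_ls, phiGen_ls, phiGen_ss]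
        have hjk' : j' ≠ k' := (Fin.castSucc_injective n).ne_iff.mp hjk
        apply SD.ext θ
        · simp [hθ j' k' hjk' k', hjk', hjk'.symm]
          rw [← lie_skew (of K k') (of K j')]
          abel
        · simp
      · exact absurd rfl hik
      · exact absurd rfl hij
      · exact absurd rfl hij
    · simp only [Set.mem_iUnion, Set.mem_singleton_iff] at hr
      obtain ⟨i, j, k, l, hij, hkl, hik, hil, hjk, hjl, rfl⟩ := hr
      rw [LieHom.map_lie, lift_of_apply, lift_of_apply]
      rcases Fin.eq_castSucc_or_eq_last i with ⟨i', rfl⟩ | rfl <;>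
        rcases Fin.eq_castSucc_or_eq_last j with ⟨j', rfl⟩ | rfl <;>
          rcases Fin.eq_castSucc_or_eq_last k with ⟨k', rfl⟩ | rfl <;>
            rcases Fin.eq_castSucc_or_eq_last l with ⟨l', rfl⟩ | rfl
      -- (s,s,s,s)
      · rw [phiGen_ss, phiGen_ss]
        apply SD.ext θ
        · simp
        · simp only [SD.snd_bracket, SD.snd_mk]
          exact dk_rel3 ((Fin.castSucc_injective n).ne_iff.mp hij)
            ((Fin.castSucc_injective n).ne_iff.mp hkl)
            ((Fin.castSucc_injective n).ne_iff.mp hik)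
            ((Fin.castSucc_injective n).ne_iff.mp hil)
            ((Fin.castSucc_injective n).ne_iff.mp hjk)
            ((Fin.castSucc_injective n).ne_iff.mp hjl)
      -- (s,s,s,l)
      · rw [phiGen_ss, phiGen_sl]
        have hij' : i' ≠ j' := (Fin.castSucc_injective n).ne_iff.mp hij
        have hki' : k' ≠ i' := fun hc => hik (congrArg castSucc hc).symm
        have hkj' : k' ≠ j' := fun hc => hjk (congrArg castSucc hc).symm
        apply SD.ext θ
        · simp [hθ i' j' hij' k', hki', hkj']
        · simp
      -- (s,s,l,s)
      · rw [phiGen_ss, phiGen_ls]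
        have hij' : i' ≠ j' := (Fin.castSucc_injective n).ne_iff.mp hij
        have hli' : l' ≠ i' := fun hc => hil (congrArg castSucc hc).symm
        have hlj' : l' ≠ j' := fun hc => hjl (congrArg castSucc hc).symm
        apply SD.ext θ
        · simp [hθ i' j' hij' l', hli', hlj']
        · simp
      · exact absurd rfl hkl
      -- (s,l,s,s)
      · rw [phiGen_sl, phiGen_ss]
        have hkl' : k' ≠ l' := (Fin.castSucc_injective n).ne_iff.mp hkl
        have hik' : i' ≠ k' := (Fin.castSucc_injective n).ne_iff.mp hik
        have hil' : i' ≠ l' := (Fin.castSucc_injective n).ne_iff.mp hil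
        apply SD.ext θ
        · simp [hθ k' l' hkl' i', hik', hil']
        · simp
      · exact absurd rfl hjl
      · exact absurd rfl hjk
      · exact absurd rfl hjk
      -- (l,s,s,s)
      · rw [phiGen_ls, phiGen_ss]
        have hkl' : k' ≠ l' := (Fin.castSucc_injective n).ne_iff.mp hkl
        have hjk' : j' ≠ k' := (Fin.castSucc_injective n).ne_iff.mp hjk
        have hjl' : j' ≠ l' := (Fin.castSucc_injective n).ne_iff.mp hjl
        apply SD.ext θ
        · simp [hθ k' l' hkl' j', hjk', hjl']
        · simp
      · exact absurd rfl hil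
      · exact absurd rfl hik
      · exact absurd rfl hkl
      · exact absurd rfl hij
      · exact absurd rfl hij
      · exact absurd rfl hij
      · exact absurd rfl hij)

theorem phi_gen (hθ : ∀ (i j : Fin n) (h : i ≠ j) (k : Fin n),
      θ (dkGen K h) (of K k) =
        if k = i then ⁅of K i, of K j⁆
        else if k = j then ⁅of K j, of K i⁆
        else 0) {i j : Fin (n + 1)} (h : i ≠ j) :
    phi θ hθ (dkGen K h) = phiGen θ ⟨(i, j), h⟩ := by
  show dkLift _ _ (dkMk K (n + 1) (of K ⟨(i, j), h⟩)) = _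
  rw [dkLift_mk, lift_of_apply]

end Phi2

open Fin

/-- Let `e : 𝕃_n → 𝔓_{n+1}` be the Lie algebra homomorphism with
`e(x_i) = A_{i,n+1}` and `ι : 𝔓_n → 𝔓_{n+1}` the one with `ι(A_{i,j}) = A_{i,j}`.
Then (i) `e` and `ι` are injective; (ii) the range of `e` is a Lie ideal of `𝔓_{n+1}`;
(iii) `𝔓_{n+1}` is the direct sum of the ranges of `e` and `ι` as `K`-vector spaces;
(iv) `[ι(σ), e(u)] = e(θ(σ)(u))` for all `σ ∈ 𝔓_n`, `u ∈ 𝕃_n`. -/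
theorem DK_semidirect_sum_decomposition (K : Type*) [Field K] (n : ℕ) (hn : 2 ≤ n)
    (e : FreeLie K n →ₗ⁅K⁆ DK K (n + 1))
    (he : ∀ i : Fin n, e (of K i) = dkGen K (Fin.castSucc_lt_last i).ne)
    (ι : DK K n →ₗ⁅K⁆ DK K (n + 1))
    (hι : ∀ (i j : Fin n) (h : i ≠ j),
      ι (dkGen K h) = dkGen K ((Fin.castSucc_injective n).ne h))
    (θ : DK K n →ₗ⁅K⁆ LieDerivation K (FreeLie K n) (FreeLie K n))
    (hθ : ∀ (i j : Fin n) (h : i ≠ j) (k : Fin n),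
      θ (dkGen K h) (of K k) =
        if k = i then ⁅of K i, of K j⁆
        else if k = j then ⁅of K j, of K i⁆
        else 0) :
    Function.Injective e ∧ Function.Injective ι ∧
    (∀ z : DK K (n + 1), ∀ y ∈ e.range, ⁅z, y⁆ ∈ e.range) ∧
    (LinearMap.range e.toLinearMap ⊓ LinearMap.range ι.toLinearMap = ⊥) ∧
    (LinearMap.range e.toLinearMap ⊔ LinearMap.range ι.toLinearMap = ⊤) ∧
    (∀ (σ : DK K n) (u : FreeLie K n), ⁅ι σ, e u⁆ = e (θ σ u)) := by
  clear hn
  -- the splitting homomorphism evaluated on the two ranges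
  have hΦe : ∀ u, phi θ hθ (e u) = SD.mk θ u 0 := by
    have hcomp : (phi θ hθ).comp e = SD.inl θ := by
      apply FreeLieAlgebra.hom_ext
      intro i
      rw [LieHom.comp_apply, he i, phi_gen, phiGen_sl]
      rfl
    intro u
    exact LieHom.congr_fun hcomp u
  have hΦι : ∀ σ, phi θ hθ (ι σ) = SD.mk θ 0 σ := by
    have hcomp : (phi θ hθ).comp ι = SD.inr θ := by
      apply dk_hom_ext
      intro i j hij
      rw [LieHom.comp_apply, hι i j hij, phi_gen, phiGen_ss]
      rfl
    intro σ
    exact LieHom.congr_fun hcomp σ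
  -- (i) injectivity
  have he_inj : Function.Injective e := by
    intro u v huv
    have h1 := congrArg (phi θ hθ) huv
    rw [hΦe, hΦe] at h1
    exact congrArg (SD.fst θ) h1
  have hι_inj : Function.Injective ι := by
    intro σ τ hστ
    have h1 := congrArg (phi θ hθ) hστ
    rw [hΦι, hΦι] at h1
    exact congrArg (SD.snd θ) h1
  -- (iv) on generators
  have key_base : ∀ (i j : Fin n) (h : i ≠ j) (u : FreeLie K n),
      ⁅ι (dkGen K h), e u⁆ = e (θ (dkGen K h) u) := by
    intro i j h
    have hbase : ∀ k : Fin n, ⁅ι (dkGen K h), e (of K k)⁆ = e (θ (dkGen K h) (of K k)) := by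
      intro k
      rw [he k, hι i j h, hθ i j h k]
      by_cases hk : k = i
      · subst hk
        rw [if_pos rfl, LieHom.map_lie, he k, he j]
        have h2 := dk_rel2 (K := K) (m := n + 1) ((Fin.castSucc_injective n).ne h)
          (Fin.castSucc_lt_last j).ne (Fin.castSucc_lt_last k).ne
        rw [lie_add] at h2
        have h3 := eq_neg_of_add_eq_zero_left h2
        conv_lhs => rw [← lie_skew]
        rw [h3, neg_neg]
      · by_cases hk2 : k = j
        · subst hk2
          rw [if_neg hk, if_pos rfl, LieHom.map_lie, he k, he i]
          have h2 := dk_rel2 (K := K) (m := n + 1)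
            ((Fin.castSucc_injective n).ne hk)
            (Fin.castSucc_lt_last i).ne (Fin.castSucc_lt_last k).ne
          rw [lie_add] at h2
          have h3 := eq_neg_of_add_eq_zero_left h2
          rw [dkGen_symm ((Fin.castSucc_injective n).ne h)]
          conv_lhs => rw [← lie_skew]
          rw [h3, neg_neg]
        · rw [if_neg hk, if_neg hk2, map_zero e]
          exact dk_rel3 ((Fin.castSucc_injective n).ne h)
            (Fin.castSucc_lt_last k).ne
            ((Fin.castSucc_injective n).ne (fun hc => hk hc.symm))
            (Fin.castSucc_lt_last i).ne
            ((Fin.castSucc_injective n).ne (fun hc => hk2 hc.symm))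
            (Fin.castSucc_lt_last j).ne
    let T : LieSubalgebra K (FreeLie K n) :=
      { carrier := {u | ⁅ι (dkGen K h), e u⁆ = e (θ (dkGen K h) u)}
        add_mem' := by
          intro a b ha hb
          simp only [Set.mem_setOf_eq] at ha hb ⊢
          rw [map_add e, lie_add, ha, hb, map_add, ← map_add e]
        zero_mem' := by
          simp only [Set.mem_setOf_eq, map_zero, lie_zero]
        smul_mem' := by
          intro c a ha
          simp only [Set.mem_setOf_eq] at ha ⊢
          rw [map_smul e, LieAlgebra.lie_smul, ha, map_smul, ← map_smul e]
        lie_mem' := by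
          intro a b ha hb
          simp only [Set.mem_setOf_eq] at ha hb ⊢
          rw [LieHom.map_lie, leibniz_lie, hb, ha, ← LieHom.map_lie,
            LieDerivation.apply_lie_eq_add, map_add e, LieHom.map_lie, LieHom.map_lie]
          abel }
    intro u
    exact freeLie_mem T hbase u
  -- (iv) in general
  have key4 : ∀ (σ : DK K n) (u : FreeLie K n), ⁅ι σ, e u⁆ = e (θ σ u) := by
    let S : LieSubalgebra K (DK K n) :=
      { carrier := {σ | ∀ u, ⁅ι σ, e u⁆ = e (θ σ u)}
        add_mem' := by
          intro a b ha hb u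
          rw [map_add ι, add_lie, ha u, hb u, map_add θ,
            LieDerivation.add_apply, map_add e]
        zero_mem' := by
          intro u
          simp only [map_zero, zero_lie, LieDerivation.zero_apply]
        smul_mem' := by
          intro c a ha u
          rw [map_smul ι, smul_lie, ha u, map_smul θ,
            LieDerivation.smul_apply, map_smul e]
        lie_mem' := by
          intro a b ha hb
          replace ha : ∀ u, ⁅ι a, e u⁆ = e (θ a u) := ha
          replace hb : ∀ u, ⁅ι b, e u⁆ = e (θ b u) := hb
          intro u
          rw [LieHom.map_lie, lie_lie, hb u, ha (θ b u), ha u, hb (θ a u),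
            LieHom.map_lie, LieDerivation.lie_apply, map_sub e] }
    intro σ u
    exact dk_mem S (fun i j hij => key_base i j hij) σ u
  refine ⟨he_inj, hι_inj, ?_, ?_, ?_, key4⟩
  · -- (ii)
    let S2 : LieSubalgebra K (DK K (n + 1)) :=
      { carrier := {z | ∀ u, ⁅z, e u⁆ ∈ e.range}
        add_mem' := by
          intro a b ha hb
          replace ha : ∀ u, ⁅a, e u⁆ ∈ e.range := ha
          replace hb : ∀ u, ⁅b, e u⁆ ∈ e.range := hb
          intro u
          rw [add_lie]
          exact add_mem (ha u) (hb u)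
        zero_mem' := by
          intro u
          rw [zero_lie]
          exact zero_mem _
        smul_mem' := by
          intro c a ha
          replace ha : ∀ u, ⁅a, e u⁆ ∈ e.range := ha
          intro u
          rw [smul_lie]
          exact e.range.smul_mem c (ha u)
        lie_mem' := by
          intro a b ha hb
          replace ha : ∀ u, ⁅a, e u⁆ ∈ e.range := ha
          replace hb : ∀ u, ⁅b, e u⁆ ∈ e.range := hb
          intro u
          rw [lie_lie]
          refine sub_mem ?_ ?_
          · obtain ⟨v, hv⟩ := ((LieHom.mem_range _ _).mp (hb u))
            rw [← hv]
            exact ha v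
          · obtain ⟨v, hv⟩ := ((LieHom.mem_range _ _).mp (ha u))
            rw [← hv]
            exact hb v }
    intro z y hy
    obtain ⟨u, rfl⟩ := ((LieHom.mem_range _ _).mp hy)
    refine dk_mem S2 ?_ z u
    intro a b hab
    rcases Fin.eq_castSucc_or_eq_last a with ⟨i, rfl⟩ | rfl <;>
      rcases Fin.eq_castSucc_or_eq_last b with ⟨j, rfl⟩ | rfl
    · intro v
      rw [show dkGen K hab = ι (dkGen K ((Fin.castSucc_injective n).ne_iff.mp hab)) from
        (hι i j _).symm, key4]
      exact LieHom.mem_range_self _ _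
    · intro v
      rw [show dkGen K hab = e (of K i) from (he i).symm, ← LieHom.map_lie]
      exact LieHom.mem_range_self _ _
    · intro v
      rw [dkGen_symm hab, show dkGen K hab.symm = e (of K j) from (he j).symm,
        ← LieHom.map_lie]
      exact LieHom.mem_range_self _ _
    · exact absurd rfl hab
  · -- intersection
    rw [eq_bot_iff]
    intro x hx
    obtain ⟨⟨u, hu⟩, ⟨σ, hσ⟩⟩ := Submodule.mem_inf.mp hx
    have h1 : SD.mk θ u 0 = SD.mk θ 0 σ := by
      rw [← hΦe, ← hΦι]
      exact congrArg (phi θ hθ) (by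
        show e u = ι σ
        rw [show e u = x from hu, show ι σ = x from hσ])
    have hu0 : u = 0 := congrArg (SD.fst θ) h1
    rw [Submodule.mem_bot]
    rw [← hu, hu0]
    exact e.toLinearMap.map_zero
  · -- sup
    set q : Submodule K (DK K (n + 1)) :=
      LinearMap.range e.toLinearMap ⊔ LinearMap.range ι.toLinearMap with hq
    have hre : ∀ u, e u ∈ q := fun u =>
      Submodule.mem_sup_left (LinearMap.mem_range_self e.toLinearMap u)
    have hrι : ∀ σ, ι σ ∈ q := fun σ =>
      Submodule.mem_sup_right (LinearMap.mem_range_self ι.toLinearMap σ)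
    let S3 : LieSubalgebra K (DK K (n + 1)) :=
      { q with
        lie_mem' := by
          intro x y hx hy
          obtain ⟨a, ⟨u, rfl⟩, b, ⟨σ, rfl⟩, rfl⟩ := Submodule.mem_sup.mp hx
          obtain ⟨a', ⟨v, rfl⟩, b', ⟨τ, rfl⟩, rfl⟩ := Submodule.mem_sup.mp hy
          have h1 : ⁅e u, e v⁆ ∈ q := by rw [← LieHom.map_lie]; exact hre _
          have h2 : ⁅ι σ, e v⁆ ∈ q := by rw [key4]; exact hre _
          have h3 : ⁅e u, ι τ⁆ ∈ q := by
            rw [← lie_skew (e u) (ι τ), key4]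
            exact neg_mem (hre _)
          have h4 : ⁅ι σ, ι τ⁆ ∈ q := by rw [← LieHom.map_lie]; exact hrι _
          show ⁅e u + ι σ, e v + ι τ⁆ ∈ q
          rw [add_lie, lie_add, lie_add]
          exact add_mem (add_mem h1 h3) (add_mem h2 h4) }
    rw [eq_top_iff]
    intro z _
    show z ∈ q
    refine dk_mem S3 ?_ z
    intro a b hab
    rcases Fin.eq_castSucc_or_eq_last a with ⟨i, rfl⟩ | rfl <;>
      rcases Fin.eq_castSucc_or_eq_last b with ⟨j, rfl⟩ | rfl
    · show dkGen K hab ∈ q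
      rw [show dkGen K hab = ι (dkGen K ((Fin.castSucc_injective n).ne_iff.mp hab)) from
        (hι i j _).symm]
      exact hrι _
    · show dkGen K hab ∈ q
      rw [show dkGen K hab = e (of K i) from (he i).symm]
      exact hre _
    · show dkGen K hab ∈ q
      rw [dkGen_symm hab, show dkGen K hab.symm = e (of K j) from (he j).symm]
      exact hre _
    · exact absurd rfl hab
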